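/- arXiv:1807.07156 — 3 statements merged into one kernel-verified Lean document; each statement's English description precedes it below -/
import Mathlib

section
/- Let J = (X, k, R) be an instance of Binary Constrained Clustering, let 0 < ε ≤ 4 and 0 < α ≤ ε/(8k), and define k̂ to be the largest index i ∈ {2,…,k} such that J is (i,α)-irreducible, or k̂ = 1 if no such index exists. Then OPT_{k̂}(J) ≤ (1 + ε/4)·OPT(J). -/
/-- The cost of clustering the vectors of `X` with the set of centers `S`. -/
noncomputable def bccCost (m : ℕ) (X : Finset (Fin m → Bool)) (S : Set (Fin m → Bool)) : ℕ :=
  ∑ x ∈ X, sInf ((fun c => hammingDist x c) '' S)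

/-- `OPT(J)` for an instance `J = (X, k, R)` of Binary Constrained Clustering. -/
noncomputable def bccOPT (m k : ℕ) (X : Finset (Fin m → Bool))
    (R : Fin m → Set (Fin k → Bool)) : ℕ :=
  sInf { c | ∃ C : Fin k → (Fin m → Bool),
    (∀ i, (fun j => C j i) ∈ R i) ∧ c = bccCost m X (Set.range C) }

/-- `OPT_j(J)`: the best cost over all index sets `I` of size `j` and all `j`-tuples of
centers satisfying the projection of `R` onto `I`. -/
noncomputable def bccOPTj (m k : ℕ) (X : Finset (Fin m → Bool))
    (R : Fin m → Set (Fin k → Bool)) (j : ℕ) : ℕ :=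
  sInf { c | ∃ I : Finset (Fin k), I.card = j ∧ ∃ C : Fin k → (Fin m → Bool),
    (∀ i, ∃ t ∈ R i, ∀ a ∈ I, C a i = t a) ∧ c = bccCost m X ((fun a => C a) '' ↑I) }

/-- `J` is `(j, α)`-irreducible if `OPT_{j-1}(J) ≥ (1+α)·OPT_j(J)`. -/
noncomputable def bccIrreducible (m k : ℕ) (X : Finset (Fin m → Bool))
    (R : Fin m → Set (Fin k → Bool)) (j : ℕ) (α : ℝ) : Prop :=
  (1 + α) * (bccOPTj m k X R j : ℝ) ≤ (bccOPTj m k X R (j - 1) : ℝ)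

lemma bccOPTj_k_eq (m k : ℕ) (X : Finset (Fin m → Bool))
    (R : Fin m → Set (Fin k → Bool)) : bccOPTj m k X R k = bccOPT m k X R := by
  unfold bccOPTj bccOPT
  congr 1
  ext c
  constructor
  · rintro ⟨I, hI, C, hC, rfl⟩
    have hIu : I = Finset.univ := Finset.eq_univ_of_card I (by simpa using hI)
    subst hIu
    refine ⟨C, fun i => ?_, ?_⟩
    · obtain ⟨t, ht, hta⟩ := hC i
      have : (fun j => C j i) = t := funext fun a => hta a (Finset.mem_univ a)
      rw [this]; exact ht
    · simp
  · rintro ⟨C, hC, rfl⟩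
    exact ⟨Finset.univ, by simp, C, fun i => ⟨fun j => C j i, hC i, fun a _ => rfl⟩, by simp⟩

lemma one_add_pow_le (α : ℝ) (hα : 0 ≤ α) :
    ∀ n : ℕ, (n : ℝ) * α ≤ 1/2 → (1 + α)^n ≤ 1 + 2 * n * α := by
  intro n
  induction n with
  | zero => simp
  | succ n ih =>
    intro h
    have hn : (n : ℝ) * α ≤ 1/2 := by
      have : (n : ℝ) ≤ (n + 1 : ℕ) := by push_cast; linarith
      nlinarith [Nat.cast_nonneg (α := ℝ) n]
    have ihn := ih hn
    have h1 : (1 + α)^(n+1) = (1 + α)^n * (1 + α) := pow_succ _ _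
    have hpos : (0:ℝ) ≤ 1 + α := by linarith
    push_cast
    push_cast at h ihn
    nlinarith [pow_nonneg hpos n]

/-- With `k̂` the largest `i ∈ {2,…,k}` such that `J` is `(i,α)`-irreducible (or `1` if
none exists), `OPT_{k̂}(J) ≤ (1 + ε/4)·OPT(J)` whenever `0 < ε ≤ 4` and
`0 < α ≤ ε/(8k)`. -/
theorem opt_khat_le (m k : ℕ) (hk : 1 ≤ k) (X : Finset (Fin m → Bool))
    (R : Fin m → Set (Fin k → Bool)) (ε α : ℝ) (hε0 : 0 < ε) (hε4 : ε ≤ 4)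
    (hα0 : 0 < α) (hα : α ≤ ε / (8 * k)) (khat : ℕ)
    (hkhat : khat = sSup ({1} ∪ {i | 2 ≤ i ∧ i ≤ k ∧ bccIrreducible m k X R i α})) :
    (bccOPTj m k X R khat : ℝ) ≤ (1 + ε / 4) * (bccOPT m k X R : ℝ) := by
  set S : Set ℕ := {1} ∪ {i | 2 ≤ i ∧ i ≤ k ∧ bccIrreducible m k X R i α} with hS
  have hbdd : BddAbove S := by
    refine ⟨k, ?_⟩
    rintro i (hi | hi)
    · simp only [Set.mem_singleton_iff] at hi; omega
    · exact hi.2.1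
  have h1S : (1 : ℕ) ∈ S := Or.inl rfl
  have hk1 : 1 ≤ khat := hkhat ▸ le_csSup hbdd h1S
  have hkk : khat ≤ k := by
    rw [hkhat]
    refine csSup_le ⟨1, h1S⟩ ?_
    rintro i (hi | hi)
    · simp only [Set.mem_singleton_iff] at hi; omega
    · exact hi.2.1
  have hnonirr : ∀ i, khat < i → i ≤ k → ¬ bccIrreducible m k X R i α := by
    intro i hlt hle hirr
    have h2 : 2 ≤ i := by omega
    have : i ∈ S := Or.inr ⟨h2, hle, hirr⟩
    have := le_csSup hbdd this
    omega
  have hnonirr' : ∀ i, khat < i → i ≤ k →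
      (bccOPTj m k X R (i - 1) : ℝ) ≤ (1 + α) * (bccOPTj m k X R i : ℝ) := by
    intro i h1 h2
    have := hnonirr i h1 h2
    unfold bccIrreducible at this
    linarith [not_le.mp this]
  have chain : ∀ d, khat + d ≤ k →
      (bccOPTj m k X R khat : ℝ) ≤ (1 + α)^d * (bccOPTj m k X R (khat + d) : ℝ) := by
    intro d
    induction d with
    | zero => intro _; simp
    | succ d ih =>
      intro h
      have hd : khat + d ≤ k := by omega
      have step := hnonirr' (khat + d + 1) (by omega) (by omega)
      have hsub : khat + d + 1 - 1 = khat + d := by omega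
      rw [hsub] at step
      have hpow : (0:ℝ) ≤ (1 + α)^d := pow_nonneg (by linarith) d
      calc (bccOPTj m k X R khat : ℝ) ≤ (1 + α)^d * (bccOPTj m k X R (khat + d) : ℝ) := ih hd
        _ ≤ (1 + α)^d * ((1 + α) * (bccOPTj m k X R (khat + d + 1) : ℝ)) := by
            exact mul_le_mul_of_nonneg_left step hpow
        _ = (1 + α)^(d+1) * (bccOPTj m k X R (khat + d + 1) : ℝ) := by ring
  have hmain := chain (k - khat) (by omega)
  rw [show khat + (k - khat) = k by omega, bccOPTj_k_eq] at hmain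
  have hOPT0 : (0:ℝ) ≤ (bccOPT m k X R : ℝ) := Nat.cast_nonneg _
  have hkα : (k : ℝ) * α ≤ ε / 8 := by
    have hkpos : (0:ℝ) < k := by exact_mod_cast hk
    have : (k:ℝ) * α ≤ (k:ℝ) * (ε / (8 * k)) := by
      exact mul_le_mul_of_nonneg_left hα (le_of_lt hkpos)
    calc (k:ℝ) * α ≤ (k:ℝ) * (ε / (8 * k)) := this
      _ = ε / 8 := by field_simp
  have hkα2 : (k : ℝ) * α ≤ 1/2 := by linarith
  have hpowk : (1 + α)^k ≤ 1 + 2 * k * α := one_add_pow_le α hα0.le k hkα2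
  have hpowmono : (1 + α)^(k - khat) ≤ (1 + α)^k :=
    pow_le_pow_right₀ (by linarith) (by omega)
  have hfinal : (1 + α)^k ≤ 1 + ε / 4 := by linarith
  calc (bccOPTj m k X R khat : ℝ)
      ≤ (1 + α)^(k - khat) * (bccOPT m k X R : ℝ) := hmain
    _ ≤ (1 + α)^k * (bccOPT m k X R : ℝ) := mul_le_mul_of_nonneg_right hpowmono hOPT0
    _ ≤ (1 + ε / 4) * (bccOPT m k X R : ℝ) := mul_le_mul_of_nonneg_right hfinal hOPT0
end

section
/- Let T : ℕ × ℕ → ℝ satisfy T(k′, n′) ≤ c for k′ = 0 or n′ = 0, and T(k′, n′) ≤ T(k′, ⌈n′/2⌉ ) + L·T(k′−1, n′) + c·L·M·n′ for k′, n′ ≥ 1 (where ⌈n′/2⌉ ≤ n′/2 + 1/2, interpreted so halving strictly decreases n′ for n′ ≥ 1), with constants c ≥ 1, L ≥ 1, M ≥ 1. Then T(k′, n′) ≤ c·L^{k′}·2^{3k′²}·M·n′ for all k′ ≥ 1, n′ ≥ 1. -/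
set_option maxHeartbeats 1600000 in
/-- The running-time recurrence `T(k',n') ≤ T(k', ⌊n'/2⌋) + L·T(k'-1, n') + c·L·M·n'`
with base cases `T(0,·), T(·,0) ≤ c` solves to `T(k',n') ≤ c·L^{k'}·2^{3k'²}·M·n'`. -/
theorem recurrence_solution (c L M : ℝ) (hc : 1 ≤ c) (hL : 1 ≤ L) (hM : 1 ≤ M)
    (T : ℕ → ℕ → ℝ)
    (hbase1 : ∀ n', T 0 n' ≤ c) (hbase2 : ∀ k', T k' 0 ≤ c)
    (hrec : ∀ k' n', 1 ≤ k' → 1 ≤ n' →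
      T k' n' ≤ T k' (n' / 2) + L * T (k' - 1) n' + c * L * M * n') :
    ∀ k' n', 1 ≤ k' → 1 ≤ n' →
      T k' n' ≤ c * L ^ k' * 2 ^ (3 * k' ^ 2) * M * n' := by
  have hc0 : (0:ℝ) < c := lt_of_lt_of_le one_pos hc
  have hL0 : (0:ℝ) < L := lt_of_lt_of_le one_pos hL
  have hM0 : (0:ℝ) < M := lt_of_lt_of_le one_pos hM
  intro k'
  induction k' with
  | zero => intro n' h; omega
  | succ k ih =>
    intro n'
    induction n' using Nat.strong_induction_on with
    | _ n ihn =>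
      intro _ hn
      have hn1 : (1:ℝ) ≤ (n:ℝ) := by exact_mod_cast hn
      have hLk : (1:ℝ) ≤ L ^ (k+1) := one_le_pow₀ hL
      have hLkk : (1:ℝ) ≤ L ^ k := one_le_pow₀ hL
      have hLk' : L ≤ L ^ (k+1) := by
        calc L = L * 1 := by ring
        _ ≤ L * L ^ k := by nlinarith
        _ = L ^ (k+1) := by ring
      have hP1 : (1:ℝ) ≤ 2 ^ (3 * k ^ 2) := one_le_pow₀ one_le_two
      have hP1' : (1:ℝ) ≤ 2 ^ (3 * (k+1) ^ 2) := one_le_pow₀ one_le_two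
      -- bound on T k n
      have hTk : T k n ≤ c * L ^ k * 2 ^ (3 * k ^ 2) * M * n := by
        rcases Nat.eq_zero_or_pos k with hk | hk
        · subst hk
          norm_num
          have h1 : (1:ℝ)*1 ≤ M * n := mul_le_mul hM hn1 zero_le_one hM0.le
          nlinarith [hbase1 n]
        · exact ih n hk hn
      -- bound on T (k+1) (n/2)
      have hhalf : (((n/2 : ℕ)):ℝ) ≤ (n:ℝ) / 2 := by
        have := Nat.cast_div_le (α := ℝ) (m := n) (n := 2)
        simpa using this
      have hB0 : (0:ℝ) ≤ c * L ^ (k+1) * 2 ^ (3 * (k+1) ^ 2) * M := by positivity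
      have hTh : T (k+1) (n/2) ≤ c * L ^ (k+1) * 2 ^ (3 * (k+1) ^ 2) * M * ((n:ℝ)/2) := by
        rcases Nat.lt_or_ge n 2 with h2 | h2
        · have hn1' : n = 1 := by omega
          subst hn1'
          have heq : T (k+1) (1/2) = T (k+1) 0 := by norm_num
          rw [heq]
          have hb := hbase2 (k+1)
          have h8 : (2:ℝ) ≤ 2 ^ (3 * (k+1) ^ 2) := by
            calc (2:ℝ) = 2 ^ 1 := (pow_one 2).symm
            _ ≤ 2 ^ (3 * (k+1) ^ 2) := by
                apply pow_le_pow_right₀ one_le_two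
                nlinarith
          have hstep : c * 2 ≤ c * L ^ (k+1) * 2 ^ (3 * (k+1) ^ 2) * M := by
            have a1 : c * 2 ≤ c * (2 ^ (3 * (k+1) ^ 2)) := by nlinarith
            have a2 : c * (2 ^ (3 * (k+1) ^ 2)) ≤ c * L ^ (k+1) * 2 ^ (3 * (k+1) ^ 2) := by
              nlinarith
            have a3 : c * L ^ (k+1) * 2 ^ (3 * (k+1) ^ 2)
                ≤ c * L ^ (k+1) * 2 ^ (3 * (k+1) ^ 2) * M := by nlinarith
            linarith
          push_cast
          linarith
        · have hlt : n / 2 < n := Nat.div_lt_self (by omega) (by omega)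
          have hge : 1 ≤ n / 2 := by omega
          have hih := ihn (n/2) hlt (by omega) hge
          calc T (k+1) (n/2) ≤ c * L ^ (k+1) * 2 ^ (3 * (k+1) ^ 2) * M * ((n/2 : ℕ):ℝ) := hih
          _ ≤ c * L ^ (k+1) * 2 ^ (3 * (k+1) ^ 2) * M * ((n:ℝ)/2) := by nlinarith
      -- the key exponent inequality
      have hexp : ((2:ℝ) ^ (3 * k ^ 2) + 1) * 2 ≤ 2 ^ (3 * (k+1) ^ 2) := by
        have h2 : (2:ℝ) ^ (3 * k ^ 2 + 2) ≤ 2 ^ (3 * (k+1) ^ 2) := by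
          apply pow_le_pow_right₀ one_le_two
          nlinarith
        have h3 : (2:ℝ) ^ (3 * k ^ 2 + 2) = 2 ^ (3 * k ^ 2) * 4 := by
          rw [pow_add]; norm_num
        linarith
      -- combine
      have hrecn := hrec (k+1) n (by omega) hn
      simp only [Nat.add_sub_cancel] at hrecn
      have hD0 : (0:ℝ) ≤ c * L ^ (k+1) * M * n := by positivity
      have hLT : L * T k n ≤ c * L ^ (k+1) * 2 ^ (3 * k ^ 2) * M * n := by
        have h : L * T k n ≤ L * (c * L ^ k * 2 ^ (3 * k ^ 2) * M * (n:ℝ)) :=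
          mul_le_mul_of_nonneg_left hTk hL0.le
        have hring : L * (c * L ^ k * 2 ^ (3 * k ^ 2) * M * (n:ℝ))
            = c * L ^ (k+1) * 2 ^ (3 * k ^ 2) * M * (n:ℝ) := by ring
        linarith
      have h3 : c * L * M * n ≤ c * L ^ (k+1) * M * n := by
        have : (0:ℝ) ≤ c * M * n := by positivity
        nlinarith
      have hmul := mul_le_mul_of_nonneg_left hexp hD0
      calc T (k+1) n ≤ T (k+1) (n/2) + L * T k n + c * L * M * n := hrecn
      _ ≤ c * L ^ (k+1) * 2 ^ (3 * (k+1) ^ 2) * M * ((n:ℝ)/2)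
            + c * L ^ (k+1) * 2 ^ (3 * k ^ 2) * M * n
            + c * L ^ (k+1) * M * n := by linarith
      _ ≤ c * L ^ (k+1) * 2 ^ (3 * (k+1) ^ 2) * M * n := by linarith [hmul]
end

section
/- In the setting of the Sampling Lemma with u = argmin_{x∈R} d^w(x,p), for every v ∈ R with d^w(v,p) > (1+ε/2)·d^w(u,p) it holds that Pr(d^w(v, Q) ≤ d^w(u, Q)) ≤ (d^w(u,p)/d^w(v,p)) · ε/2^{k+1}, provided r ≥ c·(k/ε²)·log(1/ε) for a sufficiently large universal constant c and 0 < ε ≤ 1/10. -/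
open MeasureTheory

/-- The distance from `u` to `v` weighted by `w`. -/
noncomputable def wDist {k : ℕ} (w u v : Fin k → ℝ) : ℝ := ∑ i, w i * |u i - v i|

/-- Interpret a Boolean tuple as a real tuple. -/
def bTuple {k : ℕ} (x : Fin k → Bool) : Fin k → ℝ := fun i => if x i then 1 else 0

/-- The empirical frequency vector of `r` samples per coordinate. -/
noncomputable def empFreq {k : ℕ} (r : ℕ) (ω : Fin k → Fin r → Bool) : Fin k → ℝ :=
  fun i => (1 / (r : ℝ)) * ∑ j, (if ω i j then (1 : ℝ) else 0)

/-- The product Bernoulli measure on `k × r` coin flips. -/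
noncomputable def bernoulliSamples {k : ℕ} (r : ℕ) (p : Fin k → ℝ)
    (hple : ∀ i, ENNReal.ofReal (p i) ≤ 1) :
    Measure (Fin k → Fin r → Bool) :=
  Measure.pi (fun i : Fin k =>
    Measure.pi (fun _ : Fin r => (PMF.bernoulli (ENNReal.ofReal (p i)).toNNReal
      (by simpa using ENNReal.toNNReal_mono ENNReal.one_ne_top (hple i))).toMeasure))

set_option maxHeartbeats 2000000


lemma auxOfRealProd {ι : Type*} (s : Finset ι) (f : ι → ℝ) (h : ∀ i ∈ s, 0 ≤ f i) :
    ENNReal.ofReal (∏ i ∈ s, f i) = ∏ i ∈ s, ENNReal.ofReal (f i) := by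
  induction s using Finset.cons_induction with
  | empty => simp
  | cons a s ha ih =>
    rw [Finset.prod_cons, Finset.prod_cons,
      ENNReal.ofReal_mul (h a (Finset.mem_cons_self a s)),
      ih (fun i hi => h i (Finset.mem_cons_of_mem hi))]

lemma auxMeasFinset {Ω : Type*} [MeasurableSpace Ω] [MeasurableSingletonClass Ω] [Finite Ω]
    (μ : Measure Ω) (E : Set Ω) :
    μ E = ∑ ω ∈ (Set.toFinite E).toFinset, μ {ω} := by
  have hd : Set.PairwiseDisjoint ((Set.toFinite E).toFinset : Set Ω) (fun ω => ({ω} : Set Ω)) :=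
    fun x _ y _ hxy => Set.disjoint_singleton.2 hxy
  have h2 := measure_biUnion_finset (μ := μ) hd (fun b _ => measurableSet_singleton b)
  have h3 : (⋃ ω ∈ (Set.toFinite E).toFinset, ({ω} : Set Ω)) = E := by ext x; simp
  rw [h3] at h2
  rw [h2]

lemma auxLogQuad {t : ℝ} (ht : 0 < t) (ht1 : t ≤ 1) :
    1 - t + Real.log t ≤ -(1 - t) ^ 2 / 4 := by
  have hs0 : 0 < Real.sqrt t := Real.sqrt_pos.2 ht
  have hs1 : Real.sqrt t ≤ 1 := by
    rw [show (1 : ℝ) = Real.sqrt 1 by simp]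
    exact Real.sqrt_le_sqrt ht1
  have hlog : Real.log (Real.sqrt t) ≤ Real.sqrt t - 1 := Real.log_le_sub_one_of_pos hs0
  have hsq : Real.sqrt t ^ 2 = t := Real.sq_sqrt ht.le
  have h2 : Real.log t = 2 * Real.log (Real.sqrt t) := by
    rw [Real.log_sqrt ht.le]; ring
  nlinarith [sq_nonneg (1 - Real.sqrt t), sq_nonneg (1 + Real.sqrt t),
    mul_nonneg (mul_nonneg (sub_nonneg.2 hs1) (sub_nonneg.2 hs1))
      (mul_nonneg (sub_nonneg.2 hs1) (by linarith : (0:ℝ) ≤ 3 + Real.sqrt t))]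

lemma auxExpConv {lam w W : ℝ} (hlam : 0 ≤ lam) (hw : 0 ≤ w) (hwW : w ≤ W) (hW : 0 < W) :
    Real.exp (lam * w) - 1 ≤ (w / W) * (Real.exp (lam * W) - 1) := by
  have hd1 : w / W ≤ 1 := (div_le_one hW).2 hwW
  have h := convexOn_exp.2 (Set.mem_univ (0 : ℝ)) (Set.mem_univ (lam * W))
    (show (0:ℝ) ≤ 1 - w / W by linarith) (show (0:ℝ) ≤ w / W by positivity)
    (show (1 - w / W) + w / W = 1 by ring)
  simp only [smul_eq_mul, mul_zero, zero_add, Real.exp_zero] at h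
  have hx : w / W * (lam * W) = lam * w := by field_simp
  rw [hx] at h
  have : w / W ≤ 1 := (div_le_one hW).2 hwW
  nlinarith [h]

lemma auxArithMain {ε : ℝ} (hε : 0 < ε) (hε10 : ε ≤ 1 / 10) {k : ℕ} (hk : 1 ≤ k) {r : ℝ}
    (hr : 1000 * ((k : ℝ) / ε ^ 2) * Real.log (1 / ε) ≤ r) {t : ℝ} (ht : 0 < t)
    (ht1 : t ≤ 1 - ε / 5) :
    Real.exp ((r / 2) * (1 - t + Real.log t)) ≤ (t / 2) * (ε / 2 ^ (k + 1)) := by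
  have hk1 : (1 : ℝ) ≤ (k : ℝ) := by exact_mod_cast hk
  have h10 : (10 : ℝ) ≤ 1 / ε := by rw [le_div_iff₀ hε]; linarith
  have hL2 : (2 : ℝ) ≤ Real.log (1 / ε) := by
    have he2 : Real.exp 2 ≤ 10 := by
      have h1 : Real.exp 2 = Real.exp 1 * Real.exp 1 := by
        rw [← Real.exp_add]; norm_num
      nlinarith [Real.exp_one_lt_d9, Real.exp_pos 1]
    calc (2 : ℝ) = Real.log (Real.exp 2) := (Real.log_exp 2).symm
      _ ≤ Real.log (1 / ε) := by
          apply Real.log_le_log (Real.exp_pos 2) (le_trans he2 h10)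
  set L := Real.log (1 / ε) with hLdef
  have hε2 : ε ^ 2 ≤ 1 / 100 := by nlinarith
  have hkL : 0 < (k : ℝ) * L := by nlinarith
  have hrL : 100000 * ((k : ℝ) * L) ≤ r := by
    have heq : 1000 * ((k : ℝ) / ε ^ 2) * L = 1000 * ((k : ℝ) * L) / ε ^ 2 := by ring
    have h2 : 100000 * ((k : ℝ) * L) ≤ 1000 * ((k : ℝ) * L) / ε ^ 2 := by
      rw [le_div_iff₀ (by positivity)]
      nlinarith
    linarith [heq ▸ hr]
  have hr0 : (200000 : ℝ) ≤ r := by nlinarith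
  have hlogε : Real.log ε = -L := by rw [hLdef, one_div, Real.log_inv, neg_neg]
  have hlog2 : Real.log 2 ≤ 1 := by linarith [Real.log_two_lt_d9]
  have hlog2' : (2 : ℝ) / 3 ≤ Real.log 2 := by linarith [Real.log_two_gt_d9]
  have hεL : Real.log (1/ε) = L := rfl
  have hrε : 1000 * (k : ℝ) * L ≤ r * ε ^ 2 := by
    have h2 := mul_le_mul_of_nonneg_right hr (sq_nonneg ε)
    have heq : 1000 * ((k : ℝ) / ε ^ 2) * L * ε ^ 2 = 1000 * (k : ℝ) * L := by
      field_simp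
    linarith [heq ▸ h2]
  by_cases hcase : t ≤ 1 / 8
  · have h8 : Real.log t ≤ Real.log (1 / 8) := Real.log_le_log ht hcase
    have h8' : Real.log (1 / 8 : ℝ) = -(3 * Real.log 2) := by
      rw [one_div, Real.log_inv, show (8 : ℝ) = 2 ^ 3 by norm_num, Real.log_pow]
      push_cast; ring
    have hlt2 : Real.log t ≤ -2 := by
      rw [h8'] at h8; linarith
    have hpow : Real.log ((2 : ℝ) ^ (k + 2)) = ((k : ℝ) + 2) * Real.log 2 := by
      rw [Real.log_pow]; push_cast; ring
    have key : (r / 2) * (1 - t + Real.log t) ≤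
        Real.log t + Real.log ε - Real.log ((2 : ℝ) ^ (k + 2)) := by
      rw [hpow, hlogε]
      have h1 : (r / 2) * (1 - t + Real.log t) ≤ r / 2 + (r / 2) * Real.log t := by
        nlinarith
      have h2 : (r / 2 - 1) * Real.log t ≤ (r / 2 - 1) * (-2) :=
        mul_le_mul_of_nonneg_left hlt2 (by linarith)
      have h3 : ((k : ℝ) + 2) * Real.log 2 ≤ (k : ℝ) + 2 := by
        nlinarith
      nlinarith
    calc Real.exp ((r / 2) * (1 - t + Real.log t))
        ≤ Real.exp (Real.log t + Real.log ε - Real.log ((2 : ℝ) ^ (k + 2))) :=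
          Real.exp_le_exp.2 key
      _ = t * ε / 2 ^ (k + 2) := by
          rw [Real.exp_sub, Real.exp_add, Real.exp_log ht, Real.exp_log hε,
            Real.exp_log (by positivity)]
      _ = (t / 2) * (ε / 2 ^ (k + 1)) := by
          rw [show ((2:ℝ) ^ (k + 2)) = 2 ^ (k + 1) * 2 from pow_succ 2 (k + 1)]
          ring
  · push_neg at hcase
    have ht1' : t ≤ 1 := by linarith
    have hq := auxLogQuad ht ht1'
    have h5 : ε / 5 ≤ 1 - t := by linarith
    have hsq : (ε / 5) ^ 2 ≤ (1 - t) ^ 2 := by nlinarith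
    have h1 : 1 - t + Real.log t ≤ -(ε ^ 2 / 100) := by nlinarith
    have hexp1 : (r / 2) * (1 - t + Real.log t) ≤ -(r * ε ^ 2 / 200) := by nlinarith
    have hpow : Real.log ((2 : ℝ) ^ (k + 5)) = ((k : ℝ) + 5) * Real.log 2 := by
      rw [Real.log_pow]; push_cast; ring
    have key : -(r * ε ^ 2 / 200) ≤ Real.log ε - Real.log ((2 : ℝ) ^ (k + 5)) := by
      rw [hpow, hlogε]
      have h3 : ((k : ℝ) + 5) * Real.log 2 ≤ (k : ℝ) + 5 := by nlinarith
      nlinarith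
    calc Real.exp ((r / 2) * (1 - t + Real.log t))
        ≤ Real.exp (Real.log ε - Real.log ((2 : ℝ) ^ (k + 5))) :=
          Real.exp_le_exp.2 (le_trans hexp1 key)
      _ = ε / 2 ^ (k + 5) := by
          rw [Real.exp_sub, Real.exp_log hε, Real.exp_log (by positivity)]
      _ ≤ (t / 2) * (ε / 2 ^ (k + 1)) := by
          have hfrac : (0:ℝ) ≤ ε / 2 ^ (k + 1) := by positivity
          have heq : ε / 2 ^ (k + 5) = (ε / 2 ^ (k + 1)) * (1 / 16) := by
            rw [show ((2:ℝ) ^ (k + 5)) = 2 ^ (k + 1) * 16 by ring]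
            ring
          rw [heq]
          nlinarith

lemma auxChernoff {k r : ℕ} (hr0 : 0 < r) (p wp q : Fin k → ℝ) (u : Fin k → Bool)
    (hp : ∀ i, 0 ≤ p i ∧ p i ≤ 1) (hwp : ∀ i, 0 ≤ wp i)
    (hq : ∀ i, q i = if u i then 1 - p i else p i)
    {W m : ℝ} (hW : W = ∑ i, wp i) (hW0 : 0 < W) (hm : m = ∑ i, wp i * q i)
    (E' : Finset (Fin k → Fin r → Bool))
    (hE : ∀ ω ∈ E', (r : ℝ) * W ≤ 2 * ∑ i, ∑ j, (if ω i j = u i then (0:ℝ) else wp i))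
    {lam : ℝ} (hlam : 0 ≤ lam) :
    ∑ ω ∈ E', (∏ i, ∏ j, (if ω i j then p i else 1 - p i)) ≤
      Real.exp ((r : ℝ) * ((m / W) * (Real.exp (lam * W) - 1) - lam * W / 2)) := by
  classical
  obtain ⟨G, hG⟩ : ∃ G : Fin k → Bool → ℝ, G = fun i b =>
      Real.exp (lam * (if b = u i then 0 else wp i)) * (if b then p i else 1 - p i) := ⟨_, rfl⟩
  have hGi : ∀ i b, G i b =
      Real.exp (lam * (if b = u i then 0 else wp i)) * (if b then p i else 1 - p i) := by
    intro i b; rw [hG]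
  have hq0 : ∀ i, 0 ≤ q i := by
    intro i; rw [hq i]; rcases hp i with ⟨h1, h2⟩; split <;> linarith
  have hwpW : ∀ i, wp i ≤ W := by
    intro i; rw [hW]
    exact Finset.single_le_sum (fun j _ => hwp j) (Finset.mem_univ i)
  have hG0 : ∀ i b, 0 ≤ G i b := by
    intro i b; rw [hGi]
    apply mul_nonneg (Real.exp_pos _).le
    rcases hp i with ⟨h1, h2⟩; cases b <;> simp <;> linarith
  have hP0 : ∀ ω : Fin k → Fin r → Bool,
      0 ≤ ∏ i, ∏ j, (if ω i j then p i else 1 - p i) := by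
    intro ω
    apply Finset.prod_nonneg; intro i _
    apply Finset.prod_nonneg; intro j _
    rcases hp i with ⟨h1, h2⟩; split <;> linarith
  obtain ⟨T, hT⟩ : ∃ T : (Fin k → Fin r → Bool) → ℝ,
      T = fun ω => ∑ i, ∑ j, (if ω i j = u i then (0:ℝ) else wp i) := ⟨_, rfl⟩
  have hTω : ∀ ω, T ω = ∑ i, ∑ j, (if ω i j = u i then (0:ℝ) else wp i) := by
    intro ω; rw [hT]
  have hfact : ∀ ω : Fin k → Fin r → Bool,
      Real.exp (lam * T ω) * (∏ i, ∏ j, (if ω i j then p i else 1 - p i)) =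
      ∏ i, ∏ j, G i (ω i j) := by
    intro ω
    have h1 : Real.exp (lam * T ω) =
        ∏ i, ∏ j, Real.exp (lam * (if ω i j = u i then (0:ℝ) else wp i)) := by
      rw [hTω, Finset.mul_sum, Real.exp_sum]
      apply Finset.prod_congr rfl; intro i _
      rw [Finset.mul_sum, Real.exp_sum]
    rw [h1, ← Finset.prod_mul_distrib]
    apply Finset.prod_congr rfl; intro i _
    rw [← Finset.prod_mul_distrib]
    apply Finset.prod_congr rfl; intro j _
    rw [hGi]
  have hstep1 : ∑ ω ∈ E', (∏ i, ∏ j, (if ω i j then p i else 1 - p i)) ≤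
      Real.exp (-(lam * ((r:ℝ) * W) / 2)) *
        ∑ ω : Fin k → Fin r → Bool, ∏ i, ∏ j, G i (ω i j) := by
    rw [Finset.mul_sum]
    calc ∑ ω ∈ E', (∏ i, ∏ j, (if ω i j then p i else 1 - p i))
        ≤ ∑ ω ∈ E', Real.exp (-(lam * ((r:ℝ) * W) / 2)) *
            (Real.exp (lam * T ω) * ∏ i, ∏ j, (if ω i j then p i else 1 - p i)) := by
          apply Finset.sum_le_sum; intro ω hω
          have hTb : (r:ℝ) * W ≤ 2 * T ω := by rw [hTω]; exact hE ω hω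
          have h1 : 1 ≤ Real.exp (-(lam * ((r:ℝ) * W) / 2)) * Real.exp (lam * T ω) := by
            rw [← Real.exp_add]
            apply Real.one_le_exp
            nlinarith
          have h2 := mul_le_mul_of_nonneg_right h1 (hP0 ω)
          rw [one_mul, mul_assoc] at h2
          exact h2
      _ = ∑ ω ∈ E', Real.exp (-(lam * ((r:ℝ) * W) / 2)) * ∏ i, ∏ j, G i (ω i j) := by
          apply Finset.sum_congr rfl; intro ω _; rw [hfact ω]
      _ ≤ ∑ ω : Fin k → Fin r → Bool,
            Real.exp (-(lam * ((r:ℝ) * W) / 2)) * ∏ i, ∏ j, G i (ω i j) := by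
          apply Finset.sum_le_sum_of_subset_of_nonneg (Finset.subset_univ E')
          intro ω _ _
          exact mul_nonneg (Real.exp_pos _).le
            (Finset.prod_nonneg fun i _ => Finset.prod_nonneg fun j _ => hG0 i (ω i j))
  have hsum_univ : (∑ ω : Fin k → Fin r → Bool, ∏ i, ∏ j, G i (ω i j)) =
      ∏ i, (∑ b, G i b) ^ r := by
    have h1 := Finset.prod_univ_sum (fun _ : Fin k => (Finset.univ : Finset (Fin r → Bool)))
      (fun i g => ∏ j, G i (g j))
    rw [Fintype.piFinset_univ] at h1
    rw [← h1]
    apply Finset.prod_congr rfl; intro i _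
    have h2 := Finset.prod_univ_sum (fun _ : Fin r => (Finset.univ : Finset Bool))
      (fun _ b => G i b)
    rw [Fintype.piFinset_univ] at h2
    rw [← h2, Finset.prod_const, Finset.card_univ, Fintype.card_fin]
  have hval : ∀ i, (∑ b, G i b) = 1 + q i * (Real.exp (lam * wp i) - 1) := by
    intro i
    rw [Fintype.sum_bool, hGi, hGi, hq i]
    cases hu : u i <;> simp [hu] <;> ring
  obtain ⟨C, hC⟩ : ∃ C : ℝ, C = Real.exp (lam * W) - 1 := ⟨_, rfl⟩
  have hC0 : 0 ≤ C := by
    rw [hC]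
    have := Real.one_le_exp (mul_nonneg hlam hW0.le)
    linarith
  have hbound : ∀ i, (∑ b, G i b) ^ r ≤ Real.exp ((r:ℝ) * (q i * wp i * C / W)) := by
    intro i
    rw [hval i]
    have hconv := auxExpConv hlam (hwp i) (hwpW i) hW0
    have h2 : q i * (Real.exp (lam * wp i) - 1) ≤ q i * ((wp i / W) * C) := by
      rw [hC]; exact mul_le_mul_of_nonneg_left hconv (hq0 i)
    have h3 : q i * ((wp i / W) * C) = q i * wp i * C / W := by ring
    have h4 := Real.add_one_le_exp (q i * wp i * C / W)
    have h1 : 1 + q i * (Real.exp (lam * wp i) - 1) ≤ Real.exp (q i * wp i * C / W) := by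
      linarith
    have h5 : 0 ≤ 1 + q i * (Real.exp (lam * wp i) - 1) := by
      have h6 : 0 ≤ q i * (Real.exp (lam * wp i) - 1) :=
        mul_nonneg (hq0 i) (by linarith [Real.one_le_exp (mul_nonneg hlam (hwp i))])
      linarith
    calc (1 + q i * (Real.exp (lam * wp i) - 1)) ^ r
        ≤ (Real.exp (q i * wp i * C / W)) ^ r := pow_le_pow_left₀ h5 h1 r
      _ = Real.exp ((r:ℝ) * (q i * wp i * C / W)) := (Real.exp_nat_mul _ r).symm
  have hprod : (∏ i, Real.exp ((r:ℝ) * (q i * wp i * C / W))) =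
      Real.exp ((r:ℝ) * (m / W) * C) := by
    rw [← Real.exp_sum]
    congr 1
    have h1 : ∀ i ∈ Finset.univ, (r:ℝ) * (q i * wp i * C / W) =
        (wp i * q i) * ((r:ℝ) * C / W) := fun i _ => by ring
    rw [Finset.sum_congr rfl h1, ← Finset.sum_mul, ← hm]
    ring
  calc ∑ ω ∈ E', (∏ i, ∏ j, (if ω i j then p i else 1 - p i))
      ≤ Real.exp (-(lam * ((r:ℝ) * W) / 2)) *
          ∑ ω : Fin k → Fin r → Bool, ∏ i, ∏ j, G i (ω i j) := hstep1
    _ ≤ Real.exp (-(lam * ((r:ℝ) * W) / 2)) * Real.exp ((r:ℝ) * (m / W) * C) := by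
        apply mul_le_mul_of_nonneg_left _ (Real.exp_pos _).le
        rw [hsum_univ, ← hprod]
        apply Finset.prod_le_prod (fun i _ => pow_nonneg (Finset.sum_nonneg fun b _ => hG0 i b) r)
          (fun i _ => hbound i)
    _ = Real.exp ((r : ℝ) * ((m / W) * (Real.exp (lam * W) - 1) - lam * W / 2)) := by
        rw [← Real.exp_add, hC]
        congr 1
        ring

/-- Concentration claim of the Sampling Lemma: if `u` minimizes `d^w(·,p)` over `R` and
`v ∈ R` has `d^w(v,p) > (1+ε/2)·d^w(u,p)`, then
`Pr(d^w(v,Q) ≤ d^w(u,Q)) ≤ (d^w(u,p)/d^w(v,p))·ε/2^{k+1}` for suitable sample size. -/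
theorem sampling_concentration_claim :
    ∃ c : ℝ, 0 < c ∧ ∀ (ε : ℝ), 0 < ε → ε ≤ 1 / 10 → ∀ (k r : ℕ), 0 < k → 0 < r →
      c * ((k : ℝ) / ε ^ 2) * Real.log (1 / ε) ≤ (r : ℝ) →
      ∀ (p w : Fin k → ℝ), (∀ i, 0 ≤ p i ∧ p i ≤ 1) → (∀ i, 0 ≤ w i) →
      ∀ (hple : ∀ i, ENNReal.ofReal (p i) ≤ 1),
      ∀ (R : Finset (Fin k → Bool)) (u v : Fin k → Bool), u ∈ R → v ∈ R →
      (∀ x ∈ R, wDist w (bTuple u) p ≤ wDist w (bTuple x) p) →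
      (1 + ε / 2) * wDist w (bTuple u) p < wDist w (bTuple v) p →
      (bernoulliSamples r p hple)
          {ω | wDist w (bTuple v) (empFreq r ω) ≤ wDist w (bTuple u) (empFreq r ω)} ≤
        ENNReal.ofReal
          ((wDist w (bTuple u) p / wDist w (bTuple v) p) * (ε / 2 ^ (k + 1))) := by
  classical
  refine ⟨1000, by norm_num, ?_⟩
  intro ε hε hε10 k r hk hr0 hrc p w hp hw hple R u v hu hv hmin hgap
  have hrR : (0:ℝ) < (r:ℝ) := by exact_mod_cast hr0
  -- abbreviations
  obtain ⟨q, hqi⟩ : ∃ q : Fin k → ℝ, q = fun i => if u i then 1 - p i else p i := ⟨_, rfl⟩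
  obtain ⟨q', hq'i⟩ : ∃ q' : Fin k → ℝ, q' = fun i => if v i then 1 - p i else p i := ⟨_, rfl⟩
  obtain ⟨wp, hwpi⟩ : ∃ wp : Fin k → ℝ, wp = fun i => if u i = v i then 0 else w i := ⟨_, rfl⟩
  have hqi' : ∀ i, q i = if u i then 1 - p i else p i := fun i => by rw [hqi]
  have hq'i' : ∀ i, q' i = if v i then 1 - p i else p i := fun i => by rw [hq'i]
  have hwpi' : ∀ i, wp i = if u i = v i then 0 else w i := fun i => by rw [hwpi]
  set W : ℝ := ∑ i, wp i with hWdef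
  set m : ℝ := ∑ i, wp i * q i with hmdef
  set a := wDist w (bTuple u) p with hadef
  set b := wDist w (bTuple v) p with hbdef
  -- basic coordinatewise facts
  have hql : ∀ i, 0 ≤ q i := by
    intro i; rw [hqi' i]; rcases hp i with ⟨h1, h2⟩; split <;> linarith
  have hq'l : ∀ i, 0 ≤ q' i := by
    intro i; rw [hq'i' i]; rcases hp i with ⟨h1, h2⟩; split <;> linarith
  have hqq' : ∀ i, u i ≠ v i → q i + q' i = 1 := by
    intro i hne
    rw [hqi' i, hq'i' i]
    cases hui : u i <;> cases hvi : v i <;> simp [hui, hvi] at hne ⊢ <;> ring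
  have hwp0 : ∀ i, 0 ≤ wp i := by
    intro i; rw [hwpi' i]; split
    · exact le_refl 0 |>.trans (le_refl 0)
    · exact hw i
  have hwpw : ∀ i, wp i ≤ w i := by
    intro i; rw [hwpi' i]; split
    · exact hw i
    · exact le_refl (w i)
  have habs : ∀ (x : Fin k → Bool) i, |bTuple x i - p i| = (if x i then 1 - p i else p i) := by
    intro x i; rcases hp i with ⟨h1, h2⟩
    cases hx : x i
    · have hb : bTuple x i = 0 := by simp [bTuple, hx]
      rw [hb, zero_sub, abs_neg, abs_of_nonneg h1]
      simp
    · have hb : bTuple x i = 1 := by simp [bTuple, hx]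
      rw [hb, abs_of_nonneg (by linarith)]
      simp
  have ha_eq : a = ∑ i, w i * q i := by
    rw [hadef]; unfold wDist
    exact Finset.sum_congr rfl fun i _ => by rw [habs u i, hqi' i]
  have hb_eq : b = ∑ i, w i * q' i := by
    rw [hbdef]; unfold wDist
    exact Finset.sum_congr rfl fun i _ => by rw [habs v i, hq'i' i]
  have ha0 : 0 ≤ a := by
    rw [ha_eq]; exact Finset.sum_nonneg fun i _ => mul_nonneg (hw i) (hql i)
  have hb_pos : 0 < b := by nlinarith [mul_nonneg (mul_nonneg hε.le ha0) (by norm_num : (0:ℝ) ≤ 1/2)]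
  have ha_lt_b : a < b := by nlinarith [mul_nonneg hε.le ha0]
  have hsub : b - a = W - 2 * m := by
    rw [ha_eq, hb_eq, hWdef, hmdef, ← Finset.sum_sub_distrib]
    have h2m : 2 * (∑ i, wp i * q i) = ∑ i, 2 * (wp i * q i) := by rw [Finset.mul_sum]
    rw [h2m, ← Finset.sum_sub_distrib]
    apply Finset.sum_congr rfl; intro i _
    by_cases he : u i = v i
    · have hwz : wp i = 0 := by rw [hwpi' i]; simp [he]
      have hqe : q' i = q i := by rw [hqi' i, hq'i' i, he]
      rw [hwz, hqe]; ring
    · have hwz : wp i = w i := by rw [hwpi' i]; simp [he]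
      have h1 : q' i = 1 - q i := by linarith [hqq' i he]
      rw [hwz, h1]; ring
  have hW_le_ab : W ≤ a + b := by
    rw [ha_eq, hb_eq, hWdef, ← Finset.sum_add_distrib]
    apply Finset.sum_le_sum; intro i _
    by_cases he : u i = v i
    · have hwz : wp i = 0 := by rw [hwpi' i]; simp [he]
      rw [hwz]
      exact add_nonneg (mul_nonneg (hw i) (hql i)) (mul_nonneg (hw i) (hq'l i))
    · have hwz : wp i = w i := by rw [hwpi' i]; simp [he]
      have h1 : q' i = 1 - q i := by linarith [hqq' i he]
      rw [hwz, h1]; ring_nf; nlinarith [hw i]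
  have hm0 : 0 ≤ m := by
    rw [hmdef]; exact Finset.sum_nonneg fun i _ => mul_nonneg (hwp0 i) (hql i)
  have hm_le_a : m ≤ a := by
    rw [hmdef, ha_eq]
    exact Finset.sum_le_sum fun i _ => mul_le_mul_of_nonneg_right (hwpw i) (hql i)
  have hba_pos : 0 < b - a := by linarith
  have hW0 : 0 < W := by linarith
  have h2m_le : 2 * m ≤ W * (1 - ε / 5) := by
    have h1 : (2 + ε) * a ≤ 2 * b := by nlinarith
    have h2 : ε * b ≤ (2 + ε) * (b - a) := by nlinarith
    have h3 : 2 * ((2 + ε) * (b - a)) ≤ 5 * (b - a) := by nlinarith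
    have h4 : ε * W ≤ ε * (a + b) := mul_le_mul_of_nonneg_left hW_le_ab hε.le
    have h6 : ε * (a + b) ≤ 2 * (ε * b) := by nlinarith
    linarith
  have hmb_le : m * b ≤ a * W := by
    nlinarith [mul_nonneg (sub_nonneg.2 hm_le_a) (sub_nonneg.2 ha_lt_b.le), mul_nonneg ha0 hm0]
  -- event analysis
  have hfreq : ∀ (ω : Fin k → Fin r → Bool) i,
      (r:ℝ) * empFreq r ω i = ∑ j, (if ω i j then (1:ℝ) else 0) := by
    intro ω i
    unfold empFreq
    rw [← mul_assoc, mul_one_div, div_self hrR.ne', one_mul]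
  have hQ0 : ∀ (ω : Fin k → Fin r → Bool) i, 0 ≤ empFreq r ω i := by
    intro ω i
    unfold empFreq
    apply mul_nonneg (by positivity)
    exact Finset.sum_nonneg fun j _ => by split <;> norm_num
  have hQ1 : ∀ (ω : Fin k → Fin r → Bool) i, empFreq r ω i ≤ 1 := by
    intro ω i
    unfold empFreq
    rw [one_div, inv_mul_le_iff₀ hrR]
    calc (∑ j, if ω i j then (1:ℝ) else 0) ≤ ∑ j : Fin r, (1:ℝ) :=
          Finset.sum_le_sum fun j _ => by split <;> norm_num
      _ = r := by simp
      _ ≤ (r:ℝ) * 1 := by linarith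
  obtain ⟨A, hA⟩ : ∃ A : (Fin k → Fin r → Bool) → Fin k → ℝ,
      A = fun ω i => ∑ j, (if ω i j = u i then (0:ℝ) else 1) := ⟨_, rfl⟩
  have hAi : ∀ ω i, A ω i = ∑ j, (if ω i j = u i then (0:ℝ) else 1) := by
    intro ω i; rw [hA]
  have key1 : ∀ ω i, (r:ℝ) * |bTuple u i - empFreq r ω i| = A ω i := by
    intro ω i
    rw [hAi]
    cases hui : u i
    · have hb : bTuple u i = 0 := by simp [bTuple, hui]
      rw [hb, zero_sub, abs_neg, abs_of_nonneg (hQ0 ω i), hfreq]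
      apply Finset.sum_congr rfl; intro j _
      cases hω : ω i j <;> simp [hω, hui]
    · have hb : bTuple u i = 1 := by simp [bTuple, hui]
      rw [hb, abs_of_nonneg (by linarith [hQ1 ω i]), mul_sub, mul_one, hfreq]
      rw [show (r:ℝ) = ∑ j : Fin r, (1:ℝ) by simp, ← Finset.sum_sub_distrib]
      apply Finset.sum_congr rfl; intro j _
      cases hω : ω i j <;> simp [hω, hui]
  have key2 : ∀ ω i, u i ≠ v i →
      (r:ℝ) * |bTuple v i - empFreq r ω i| = (r:ℝ) - A ω i := by
    intro ω i hne
    rw [hAi]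
    cases hui : u i <;> cases hvi : v i <;> rw [hui, hvi] at hne <;> try exact absurd rfl hne
    · -- u false, v true
      have hb : bTuple v i = 1 := by simp [bTuple, hvi]
      rw [hb, abs_of_nonneg (by linarith [hQ1 ω i]), mul_sub, mul_one, hfreq]
      rw [show (r:ℝ) = ∑ j : Fin r, (1:ℝ) by simp]
      rw [← Finset.sum_sub_distrib, ← Finset.sum_sub_distrib]
      apply Finset.sum_congr rfl; intro j _
      cases hω : ω i j <;> simp [hω, hui]
    · -- u true, v false
      have hb : bTuple v i = 0 := by simp [bTuple, hvi]
      rw [hb, zero_sub, abs_neg, abs_of_nonneg (hQ0 ω i), hfreq]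
      rw [show (r:ℝ) = ∑ j : Fin r, (1:ℝ) by simp]
      rw [← Finset.sum_sub_distrib]
      apply Finset.sum_congr rfl; intro j _
      cases hω : ω i j <;> simp [hω, hui]
  have hEv : ∀ ω : Fin k → Fin r → Bool,
      wDist w (bTuple v) (empFreq r ω) ≤ wDist w (bTuple u) (empFreq r ω) →
      (r:ℝ) * W ≤ 2 * ∑ i, ∑ j, (if ω i j = u i then (0:ℝ) else wp i) := by
    intro ω hω
    have hTA : (∑ i, ∑ j, (if ω i j = u i then (0:ℝ) else wp i)) = ∑ i, wp i * A ω i := by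
      apply Finset.sum_congr rfl; intro i _
      rw [hAi, Finset.mul_sum]
      apply Finset.sum_congr rfl; intro j _
      split <;> ring
    have hsum : ∑ i, w i * ((r:ℝ) * |bTuple v i - empFreq r ω i|) ≤
        ∑ i, w i * ((r:ℝ) * |bTuple u i - empFreq r ω i|) := by
      have h2 := mul_le_mul_of_nonneg_left hω hrR.le
      unfold wDist at h2
      rw [Finset.mul_sum, Finset.mul_sum] at h2
      calc ∑ i, w i * ((r:ℝ) * |bTuple v i - empFreq r ω i|)
          = ∑ i, (r:ℝ) * (w i * |bTuple v i - empFreq r ω i|) :=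
            Finset.sum_congr rfl fun i _ => by ring
        _ ≤ ∑ i, (r:ℝ) * (w i * |bTuple u i - empFreq r ω i|) := h2
        _ = ∑ i, w i * ((r:ℝ) * |bTuple u i - empFreq r ω i|) :=
            Finset.sum_congr rfl fun i _ => by ring
    have hper : ∀ i, w i * ((r:ℝ) * |bTuple u i - empFreq r ω i|) -
        w i * ((r:ℝ) * |bTuple v i - empFreq r ω i|) = wp i * (2 * A ω i - (r:ℝ)) := by
      intro i
      by_cases he : u i = v i
      · have hbv : bTuple v i = bTuple u i := by
          unfold bTuple; rw [he]
        have hwz : wp i = 0 := by rw [hwpi' i]; simp [he]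
        rw [hbv, hwz]; ring
      · rw [key1 ω i, key2 ω i he]
        have hwz : wp i = w i := by rw [hwpi' i]; simp [he]
        rw [hwz]; ring
    have hsum2 : 0 ≤ ∑ i, wp i * (2 * A ω i - (r:ℝ)) := by
      calc (0:ℝ) ≤ (∑ i, w i * ((r:ℝ) * |bTuple u i - empFreq r ω i|)) -
            ∑ i, w i * ((r:ℝ) * |bTuple v i - empFreq r ω i|) := by linarith
        _ = ∑ i, (w i * ((r:ℝ) * |bTuple u i - empFreq r ω i|) -
            w i * ((r:ℝ) * |bTuple v i - empFreq r ω i|)) := (Finset.sum_sub_distrib _ _).symm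
        _ = ∑ i, wp i * (2 * A ω i - (r:ℝ)) := Finset.sum_congr rfl fun i _ => hper i
    have hsplit : (∑ i, wp i * (2 * A ω i - (r:ℝ))) =
        2 * (∑ i, wp i * A ω i) - (r:ℝ) * W := by
      rw [hWdef, Finset.mul_sum, Finset.mul_sum, ← Finset.sum_sub_distrib]
      apply Finset.sum_congr rfl; intro i _; ring
    rw [hTA]
    rw [hsplit] at hsum2
    linarith
  -- measure computation
  obtain ⟨P, hP⟩ : ∃ P : (Fin k → Fin r → Bool) → ℝ,
      P = fun ω => ∏ i, ∏ j, (if ω i j then p i else 1 - p i) := ⟨_, rfl⟩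
  have hPi : ∀ ω, P ω = ∏ i, ∏ j, (if ω i j then p i else 1 - p i) := by
    intro ω; rw [hP]
  have hP0 : ∀ ω, 0 ≤ P ω := by
    intro ω; rw [hPi]
    apply Finset.prod_nonneg; intro i _
    apply Finset.prod_nonneg; intro j _
    rcases hp i with ⟨h1, h2⟩; split <;> linarith
  have hμsingle : ∀ ω : Fin k → Fin r → Bool,
      bernoulliSamples r p hple {ω} = ENNReal.ofReal (P ω) := by
    intro ω
    unfold bernoulliSamples
    rw [← Set.univ_pi_singleton ω, Measure.pi_pi]
    rw [hPi, auxOfRealProd Finset.univ _ (fun i _ => Finset.prod_nonneg fun j _ => by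
      rcases hp i with ⟨h1, h2⟩; split <;> linarith)]
    apply Finset.prod_congr rfl; intro i _
    rw [← Set.univ_pi_singleton (ω i), Measure.pi_pi]
    rw [auxOfRealProd Finset.univ _ (fun j _ => by rcases hp i with ⟨h1, h2⟩; split <;> linarith)]
    apply Finset.prod_congr rfl; intro j _
    rw [PMF.toMeasure_apply_singleton _ _ (measurableSet_singleton _)]
    refine (PMF.bernoulli_apply ..).trans ?_
    cases hb : ω i j
    · simp only [Bool.cond_false]
      rw [show (if (false = true) then p i else 1 - p i) = 1 - p i by simp]
      rw [ENNReal.ofReal_sub 1 (hp i).1, ENNReal.ofReal_one]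
      rw [ENNReal.coe_sub, ENNReal.coe_one, ENNReal.coe_toNNReal ENNReal.ofReal_ne_top]
    · simp [ENNReal.coe_toNNReal ENNReal.ofReal_ne_top]
  obtain ⟨Eset, hEset⟩ : ∃ E : Set (Fin k → Fin r → Bool),
      E = {ω | wDist w (bTuple v) (empFreq r ω) ≤ wDist w (bTuple u) (empFreq r ω)} := ⟨_, rfl⟩
  rw [← hEset]
  have hμE : bernoulliSamples r p hple Eset =
      ENNReal.ofReal (∑ ω ∈ (Set.toFinite Eset).toFinset, P ω) := by
    rw [auxMeasFinset, ENNReal.ofReal_sum_of_nonneg (fun ω _ => hP0 ω)]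
    exact Finset.sum_congr rfl fun ω _ => hμsingle ω
  rw [hμE]
  apply ENNReal.ofReal_le_ofReal
  -- real inequality
  have hch : ∀ lam : ℝ, 0 ≤ lam → (∑ ω ∈ (Set.toFinite Eset).toFinset, P ω) ≤
      Real.exp ((r : ℝ) * ((m / W) * (Real.exp (lam * W) - 1) - lam * W / 2)) := by
    intro lam hlam
    have hmem : ∀ ω ∈ (Set.toFinite Eset).toFinset,
        (r : ℝ) * W ≤ 2 * ∑ i, ∑ j, (if ω i j = u i then (0:ℝ) else wp i) := by
      intro ω hω
      rw [Set.Finite.mem_toFinset, hEset] at hω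
      exact hEv ω hω
    have := auxChernoff hr0 p wp q u hp hwp0 hqi' hWdef hW0 hmdef
      (Set.toFinite Eset).toFinset hmem hlam
    calc (∑ ω ∈ (Set.toFinite Eset).toFinset, P ω)
        = ∑ ω ∈ (Set.toFinite Eset).toFinset, ∏ i, ∏ j, (if ω i j then p i else 1 - p i) :=
          Finset.sum_congr rfl fun ω _ => hPi ω
      _ ≤ _ := this
  have hrhs0 : 0 ≤ (a / b) * (ε / 2 ^ (k + 1)) := by positivity
  rcases eq_or_lt_of_le hm0 with hm_eq | hm_pos
  · -- m = 0 : probability is zero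
    have hS1 : (∑ ω ∈ (Set.toFinite Eset).toFinset, P ω) ≤ 1 := by
      have h0 := hch 0 le_rfl
      have he : (r : ℝ) * ((m / W) * (Real.exp (0 * W) - 1) - 0 * W / 2) = 0 := by
        rw [zero_mul, Real.exp_zero]; ring
      rw [he, Real.exp_zero] at h0
      exact h0
    have hS0 : (∑ ω ∈ (Set.toFinite Eset).toFinset, P ω) ≤ 0 := by
      by_contra hcon
      push_neg at hcon
      obtain ⟨S, hSdef⟩ : ∃ S : ℝ, S = ∑ ω ∈ (Set.toFinite Eset).toFinset, P ω := ⟨_, rfl⟩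
      rw [← hSdef] at hcon hS1
      have hlogS : Real.log S ≤ 0 := Real.log_nonpos hcon.le hS1
      have hrW : 0 < (r:ℝ) * W := mul_pos hrR hW0
      obtain ⟨lam, hlamdef⟩ : ∃ lam : ℝ, lam = (1 - Real.log S) * (2 / ((r:ℝ) * W)) := ⟨_, rfl⟩
      have hlam0 : 0 ≤ lam := by
        rw [hlamdef]
        apply mul_nonneg (by linarith) (by positivity)
      have hb0 := hch lam hlam0
      rw [← hSdef] at hb0
      have hexp : (r : ℝ) * ((m / W) * (Real.exp (lam * W) - 1) - lam * W / 2) =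
          Real.log S - 1 := by
        rw [← hm_eq, zero_div, zero_mul, zero_sub, hlamdef]
        field_simp
        ring
      rw [hexp, Real.exp_sub, Real.exp_log hcon] at hb0
      have hd : S / Real.exp 1 < S := div_lt_self hcon (by nlinarith [Real.exp_one_gt_d9])
      linarith
    linarith
  · -- 0 < m
    obtain ⟨t, htdef⟩ : ∃ t : ℝ, t = 2 * m / W := ⟨_, rfl⟩
    have ht0 : 0 < t := by rw [htdef]; positivity
    have ht1 : t ≤ 1 - ε / 5 := by
      rw [htdef, div_le_iff₀ hW0]
      nlinarith
    obtain ⟨lam, hlamdef⟩ : ∃ lam : ℝ, lam = Real.log (1 / t) / W := ⟨_, rfl⟩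
    have h1t : 1 ≤ 1 / t := by
      rw [le_div_iff₀ ht0]; nlinarith
    have hlam0 : 0 ≤ lam := by
      rw [hlamdef]; exact div_nonneg (Real.log_nonneg h1t) hW0.le
    have hexplam : Real.exp (lam * W) = 1 / t := by
      rw [hlamdef, div_mul_cancel₀ _ hW0.ne']
      exact Real.exp_log (by positivity)
    have hSb := hch lam hlam0
    have hexp_eq : (r : ℝ) * ((m / W) * (Real.exp (lam * W) - 1) - lam * W / 2) =
        ((r:ℝ) / 2) * (1 - t + Real.log t) := by
      rw [hexplam, hlamdef, div_mul_cancel₀ _ hW0.ne', one_div, Real.log_inv]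
      have hmW : m / W = t / 2 := by rw [htdef]; field_simp
      rw [hmW]
      field_simp
      ring
    rw [hexp_eq] at hSb
    have harith := auxArithMain hε hε10 (Nat.one_le_iff_ne_zero.2 hk.ne') hrc ht0 ht1
    have hta : t / 2 ≤ a / b := by
      have hmW : t / 2 = m / W := by rw [htdef]; field_simp
      rw [hmW, div_le_div_iff₀ hW0 hb_pos]
      nlinarith
    have hfrac0 : (0:ℝ) ≤ ε / 2 ^ (k + 1) := by positivity
    have := mul_le_mul_of_nonneg_right hta hfrac0
    linarith
end
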